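/- Let X be a topological space and let 𝓤 be a filter on X × X that is a quasi-uniformity (every U ∈ 𝓤 contains the diagonal, and for every U ∈ 𝓤 there exists V ∈ 𝓤 with V ∘ V ⊆ U) and is normal with respect to the topology of X. Then for every nonempty subset A ⊆ X and every entourage U ∈ 𝓤 there exists a continuous function f : X → ℝ with values in [0,1] such that A ⊆ f⁻¹({0}) and {x ∈ X : f x < 1} ⊆ interior(closure(B(A;U))), where B(A;U) = {y ∈ X : ∃ a ∈ A, (a,y) ∈ U}. -/

import Mathlib

open Topology

/-- `B(A;U)`, the `U`-neighborhood of a set `A`. -/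
def setBall {X : Type*} (A : Set X) (U : Set (X × X)) : Set X :=
  {y : X | ∃ a ∈ A, (a, y) ∈ U}

/-- A quasi-uniformity on `X` is a filter on `X × X` all of whose members contain
the diagonal, such that every member `U` contains a composition `V ○ V ⊆ U` of
some member `V` with itself. -/
def IsQuasiUniformity {X : Type*} (𝓤 : Filter (X × X)) : Prop :=
  (∀ U ∈ 𝓤, SetRel.id ⊆ U) ∧ (∀ U ∈ 𝓤, ∃ V ∈ 𝓤, SetRel.comp V V ⊆ U)

/-- A quasi-uniformity on a topological space is normal if
`closure A ⊆ interior (closure B(A;U))` for all `A` and all entourages `U`. -/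
def IsNormalQuasiUniformity {X : Type*} [TopologicalSpace X]
    (𝓤 : Filter (X × X)) : Prop :=
  ∀ A : Set X, ∀ U ∈ 𝓤, closure A ⊆ interior (closure (setBall A U))

namespace QUAux

lemma setBall_mono_right {X : Type*} (A : Set X) {U V : Set (X × X)} (h : U ⊆ V) :
    setBall A U ⊆ setBall A V := fun _ ⟨a, ha, hu⟩ => ⟨a, ha, h hu⟩

lemma setBall_setBall {X : Type*} (A : Set X) (U V : Set (X × X)) :
    setBall (setBall A U) V = setBall A (SetRel.comp U V) := by
  ext y
  constructor
  · rintro ⟨b, ⟨a, ha, hab⟩, hby⟩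
    exact ⟨a, ha, b, hab, hby⟩
  · rintro ⟨a, ha, b, hab, hby⟩
    exact ⟨b, ⟨a, ha, hab⟩, hby⟩

variable {X : Type*}

/-- The dyadic family of ball sets: `G A V n k` corresponds to the dyadic `k / 2^n`. -/
def G (A : Set X) (V : ℕ → Set (X × X)) : ℕ → ℕ → Set X
  | 0, k => if k = 0 then A else setBall A (V 0)
  | (n+1), k => if k % 2 = 0 then G A V n (k / 2) else setBall (G A V n (k / 2)) (V (n+1))

lemma G_two_mul (A : Set X) (V : ℕ → Set (X × X)) (n k : ℕ) :
    G A V (n+1) (2 * k) = G A V n k := by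
  simp [G, Nat.mul_mod_right, Nat.mul_div_cancel_left _ (by norm_num : (0:ℕ) < 2)]

lemma G_two_mul_add_one (A : Set X) (V : ℕ → Set (X × X)) (n k : ℕ) :
    G A V (n+1) (2 * k + 1) = setBall (G A V n k) (V (n+1)) := by
  have h1 : (2 * k + 1) % 2 = 1 := by omega
  have h2 : (2 * k + 1) / 2 = k := by omega
  simp [G, h1, h2]

lemma G_mul_pow (A : Set X) (V : ℕ → Set (X × X)) (n k p : ℕ) :
    G A V (n + p) (k * 2 ^ p) = G A V n k := by
  induction p with
  | zero => simp
  | succ p ih =>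
      have : k * 2 ^ (p + 1) = 2 * (k * 2 ^ p) := by ring
      rw [this, show n + (p+1) = (n+p) + 1 from rfl, G_two_mul, ih]

lemma G_zero (A : Set X) (V : ℕ → Set (X × X)) (n : ℕ) : G A V n 0 = A := by
  have := G_mul_pow A V 0 0 n
  simpa [G] using this

lemma G_top (A : Set X) (V : ℕ → Set (X × X)) (n : ℕ) :
    G A V n (2 ^ n) = setBall A (V 0) := by
  induction n with
  | zero => simp [G]
  | succ n ih =>
      have : (2:ℕ) ^ (n+1) = 2 * 2 ^ n := by ring
      rw [this, G_two_mul, ih]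

/-- Key chain property: applying `V n` to the `k`-th set stays in the `(k+1)`-th set. -/
lemma ballG (A : Set X) (V : ℕ → Set (X × X))
    (hVc : ∀ n, SetRel.comp (V (n+1)) (V (n+1)) ⊆ V n) :
    ∀ n k, k < 2 ^ n → setBall (G A V n k) (V n) ⊆ G A V n (k + 1) := by
  intro n
  induction n with
  | zero =>
      intro k hk
      interval_cases k
      simp [G]
  | succ n ih =>
      intro k hk
      rcases Nat.even_or_odd k with ⟨j, hj⟩ | ⟨j, hj⟩
      · subst hj
        rw [show j + j = 2 * j from by ring, G_two_mul, G_two_mul_add_one]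
      · subst hj
        have hjlt : j < 2 ^ n := by
          have : 2 * j + 1 < 2 ^ (n+1) := hk
          have h2 : (2:ℕ) ^ (n+1) = 2 * 2 ^ n := by ring
          omega
        rw [G_two_mul_add_one, show 2 * j + 1 + 1 = 2 * (j + 1) from by ring, G_two_mul,
          setBall_setBall]
        calc setBall (G A V n j) (SetRel.comp (V (n+1)) (V (n+1)))
            ⊆ setBall (G A V n j) (V n) := setBall_mono_right _ (hVc n)
          _ ⊆ G A V n (j + 1) := ih j hjlt

variable [TopologicalSpace X] {𝓤 : Filter (X × X)}

/-- The open dyadic family. -/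
def O (A : Set X) (V : ℕ → Set (X × X)) (n k : ℕ) : Set X :=
  interior (closure (G A V n k))

lemma isOpen_O (A : Set X) (V : ℕ → Set (X × X)) (n k : ℕ) : IsOpen (O A V n k) :=
  isOpen_interior

lemma chainO (hn : IsNormalQuasiUniformity 𝓤) (A : Set X) (V : ℕ → Set (X × X))
    (hV : ∀ n, V n ∈ 𝓤) (hVc : ∀ n, SetRel.comp (V (n+1)) (V (n+1)) ⊆ V n)
    {n k : ℕ} (hk : k < 2 ^ n) :
    closure (G A V n k) ⊆ O A V n (k + 1) := by
  calc closure (G A V n k) ⊆ interior (closure (setBall (G A V n k) (V n))) :=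
        hn _ _ (hV n)
    _ ⊆ O A V n (k + 1) := interior_mono (closure_mono (ballG A V hVc n k hk))

lemma monoO (hn : IsNormalQuasiUniformity 𝓤) (A : Set X) (V : ℕ → Set (X × X))
    (hV : ∀ n, V n ∈ 𝓤) (hVc : ∀ n, SetRel.comp (V (n+1)) (V (n+1)) ⊆ V n)
    {n k₁ k₂ : ℕ} (h : k₁ ≤ k₂) (h2 : k₂ ≤ 2 ^ n) :
    O A V n k₁ ⊆ O A V n k₂ := by
  induction k₂, h using Nat.le_induction with
  | base => exact subset_rfl
  | succ k₂ hk ih =>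
      calc O A V n k₁ ⊆ O A V n k₂ := ih (by omega)
        _ ⊆ closure (G A V n k₂) := interior_subset
        _ ⊆ O A V n (k₂ + 1) := chainO hn A V hV hVc (by omega)

lemma O_mul_pow (A : Set X) (V : ℕ → Set (X × X)) (n k p : ℕ) :
    O A V (n + p) (k * 2 ^ p) = O A V n k := by
  unfold O; rw [G_mul_pow]

lemma crossO (hn : IsNormalQuasiUniformity 𝓤) (A : Set X) (V : ℕ → Set (X × X))
    (hV : ∀ n, V n ∈ 𝓤) (hVc : ∀ n, SetRel.comp (V (n+1)) (V (n+1)) ⊆ V n)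
    {m j n k : ℕ} (h : j * 2 ^ n ≤ k * 2 ^ m) (hk : k ≤ 2 ^ n) :
    O A V m j ⊆ O A V n k := by
  have e1 : O A V m j = O A V (m + n) (j * 2 ^ n) := (O_mul_pow A V m j n).symm
  have e2 : O A V n k = O A V (m + n) (k * 2 ^ m) := by
    rw [Nat.add_comm]; exact (O_mul_pow A V n k m).symm
  rw [e1, e2]
  refine monoO hn A V hV hVc h ?_
  calc k * 2 ^ m ≤ 2 ^ n * 2 ^ m := Nat.mul_le_mul_right _ hk
    _ = 2 ^ (m + n) := by rw [← pow_add, Nat.add_comm]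

lemma exists_dyadic {a b : ℝ} (ha : 0 ≤ a) (hab : a < b) :
    ∃ n k : ℕ, a < (k:ℝ) / 2 ^ n ∧ ((k:ℝ) + 1) / 2 ^ n < b := by
  obtain ⟨n, hn⟩ := exists_pow_lt_of_lt_one (by linarith : (0:ℝ) < (b - a) / 2)
    (by norm_num : (1:ℝ)/2 < 1)
  have h2n : (0:ℝ) < 2 ^ n := by positivity
  have hn' : 2 < (b - a) * 2 ^ n := by
    have : ((1:ℝ)/2) ^ n = 1 / 2 ^ n := by rw [div_pow]; norm_num
    rw [this, div_lt_div_iff₀ h2n (by norm_num : (0:ℝ) < 2)] at hn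
    linarith
  refine ⟨n, ⌊a * 2 ^ n⌋₊ + 1, ?_, ?_⟩
  · rw [lt_div_iff₀ h2n]
    push_cast
    have := Nat.lt_floor_add_one (a * 2 ^ n)
    linarith
  · rw [div_lt_iff₀ h2n]
    push_cast
    have := Nat.floor_le (show 0 ≤ a * 2 ^ n by positivity)
    linarith

end QUAux

/-- Theorem `main`. If `𝓤` is a normal quasi-uniformity on a
topological space `X`, then for every nonempty `A ⊆ X` and every entourage
`U ∈ 𝓤` there is a continuous `f : X → [0,1] ⊆ ℝ` with `A ⊆ f⁻¹(0)` and
`{f < 1} ⊆ interior (closure B(A;U))`. -/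
theorem exists_urysohn_function_of_normal_quasiUniformity {X : Type*}
    [TopologicalSpace X] (𝓤 : Filter (X × X)) (hq : IsQuasiUniformity 𝓤)
    (hn : IsNormalQuasiUniformity 𝓤) (A : Set X) (hA : A.Nonempty)
    (U : Set (X × X)) (hU : U ∈ 𝓤) :
    ∃ f : X → ℝ, Continuous f ∧ (∀ x, f x ∈ Set.Icc (0 : ℝ) 1) ∧
      A ⊆ f ⁻¹' {0} ∧ {x : X | f x < 1} ⊆ interior (closure (setBall A U)) := by
  classical
  obtain ⟨hdiag, hcomp⟩ := hq
  choose! nxt hnxt1 hnxt2 using hcomp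
  -- the chain of entourages
  set Vs : ℕ → Set (X × X) := fun n => nxt^[n + 1] U with hVs
  have hVs_succ : ∀ n, Vs (n + 1) = nxt (Vs n) := by
    intro n
    simp only [hVs, Function.iterate_succ_apply']
  have hVmem : ∀ n, Vs n ∈ 𝓤 := by
    intro n
    induction n with
    | zero => exact hnxt1 U hU
    | succ n ih => rw [hVs_succ]; exact hnxt1 _ ih
  have hVc : ∀ n, SetRel.comp (Vs (n+1)) (Vs (n+1)) ⊆ Vs n := by
    intro n; rw [hVs_succ]; exact hnxt2 _ (hVmem n)
  have hV0U : Vs 0 ⊆ U := by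
    intro p hp
    have hdp : (p.1, p.1) ∈ Vs 0 := hdiag _ (hVmem 0) rfl
    have : p ∈ SetRel.comp (Vs 0) (Vs 0) := ⟨p.1, hdp, hp⟩
    exact hnxt2 U hU this
  set O' : ℕ → ℕ → Set X := QUAux.O A Vs with hO'
  -- the candidate values at x
  set S : X → Set ℝ := fun x =>
    insert (1 : ℝ) {q : ℝ | ∃ n k : ℕ, k ≤ 2 ^ n ∧ x ∈ O' n k ∧ q = (k : ℝ) / 2 ^ n}
    with hS
  set f : X → ℝ := fun x => sInf (S x) with hf
  have hSne : ∀ x, (S x).Nonempty := fun x => ⟨1, Set.mem_insert _ _⟩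
  have hSbdd : ∀ x, BddBelow (S x) := by
    intro x
    refine ⟨0, ?_⟩
    rintro q (rfl | ⟨n, k, hk, hx, rfl⟩)
    · norm_num
    · positivity
  have hf_le : ∀ x (n k : ℕ), k ≤ 2 ^ n → x ∈ O' n k → f x ≤ (k : ℝ) / 2 ^ n := by
    intro x n k hk hx
    exact csInf_le (hSbdd x) (Set.mem_insert_of_mem _ ⟨n, k, hk, hx, rfl⟩)
  have hf_nonneg : ∀ x, 0 ≤ f x := fun x => le_csInf (hSne x) (fun q hq => by
    rcases hq with rfl | ⟨n, k, hk, hx, rfl⟩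
    · norm_num
    · positivity)
  have hf_le_one : ∀ x, f x ≤ 1 := fun x => csInf_le (hSbdd x) (Set.mem_insert _ _)
  -- lower bound on f from not being in a closure
  have hf_ge : ∀ (y : X) (n k : ℕ), k ≤ 2 ^ n → y ∉ closure (O' n k) →
      (k : ℝ) / 2 ^ n ≤ f y := by
    intro y n k hk hy
    refine le_csInf (hSne y) ?_
    rintro q (rfl | ⟨m, j, hj, hyO, rfl⟩)
    · calc (k : ℝ) / 2 ^ n ≤ 2 ^ n / 2 ^ n := by
            apply div_le_div_of_nonneg_right _ (by positivity)
            · exact_mod_cast Nat.cast_le.mpr hk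
          _ = 1 := by field_simp
    · by_contra hlt
      push_neg at hlt
      have hnat : j * 2 ^ n < k * 2 ^ m := by
        have h2m : (0:ℝ) < 2 ^ m := by positivity
        have h2n : (0:ℝ) < 2 ^ n := by positivity
        rw [div_lt_div_iff₀ h2m h2n] at hlt
        exact_mod_cast (by push_cast at hlt ⊢; exact hlt : ((j * 2 ^ n : ℕ) : ℝ) < ((k * 2 ^ m : ℕ) : ℝ))
      have : y ∈ O' n k :=
        QUAux.crossO hn A Vs hVmem hVc (le_of_lt hnat) hk hyO
      exact hy (subset_closure this)
  refine ⟨f, ?_, fun x => ⟨hf_nonneg x, hf_le_one x⟩, ?_, ?_⟩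
  · -- continuity
    rw [continuous_iff_continuousAt]
    intro x
    rw [ContinuousAt, tendsto_order]
    constructor
    · -- a < f x → eventually a < f y
      intro a ha
      rcases lt_or_ge a 0 with ha0 | ha0
      · exact Filter.Eventually.of_forall fun y => lt_of_lt_of_le ha0 (hf_nonneg y)
      · obtain ⟨n, k, hak, hkfx⟩ := QUAux.exists_dyadic ha0 ha
        have hk1 : k + 1 ≤ 2 ^ n := by
          by_contra hc
          push_neg at hc
          have h2n : (0:ℝ) < 2 ^ n := by positivity
          have hcast : (2:ℝ) ^ n ≤ (k : ℝ) + 1 := by exact_mod_cast hc.le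
          have h1 : (1:ℝ) ≤ ((k:ℝ) + 1) / 2 ^ n := by
            rw [le_div_iff₀ h2n]; linarith
          have := hf_le_one x
          linarith
        have hkn : k < 2 ^ n := by omega
        have hxnc : x ∉ closure (O' n k) := by
          intro hxc
          have hsub : closure (O' n k) ⊆ O' n (k + 1) := by
            calc closure (O' n k) ⊆ closure (closure (QUAux.G A Vs n k)) :=
                  closure_mono interior_subset
              _ = closure (QUAux.G A Vs n k) := closure_closure
              _ ⊆ O' n (k + 1) := QUAux.chainO hn A Vs hVmem hVc hkn
          have := hf_le x n (k+1) hk1 (hsub hxc)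
          push_cast at this
          linarith
        have hmem : (closure (O' n k))ᶜ ∈ 𝓝 x :=
          isClosed_closure.isOpen_compl.mem_nhds hxnc
        refine Filter.eventually_of_mem hmem fun y hy => ?_
        exact lt_of_lt_of_le hak (hf_ge y n k (by omega) hy)
    · -- f x < b → eventually f y < b
      intro b hb
      obtain ⟨q, hqS, hqb⟩ := exists_lt_of_csInf_lt (hSne x) hb
      rcases hqS with rfl | ⟨n, k, hk, hx, rfl⟩
      · exact Filter.Eventually.of_forall fun y => lt_of_le_of_lt (hf_le_one y) hqb
      · have hmem : O' n k ∈ 𝓝 x := (QUAux.isOpen_O A Vs n k).mem_nhds hx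
        refine Filter.eventually_of_mem hmem fun y hy => ?_
        exact lt_of_le_of_lt (hf_le y n k hk hy) hqb
  · -- A ⊆ f ⁻¹' {0}
    intro x hx
    have hsmall : ∀ n : ℕ, f x ≤ 1 / 2 ^ n := by
      intro n
      have hxG : x ∈ QUAux.G A Vs n 0 := by rw [QUAux.G_zero]; exact hx
      have hxO : x ∈ O' n 1 :=
        QUAux.chainO hn A Vs hVmem hVc (by positivity) (subset_closure hxG)
      have := hf_le x n 1 (Nat.one_le_two_pow) hxO
      simpa using this
    have hle : f x ≤ 0 := by
      by_contra hc
      push_neg at hc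
      obtain ⟨n, hn'⟩ := exists_pow_lt_of_lt_one hc (by norm_num : (1:ℝ)/2 < 1)
      have : ((1:ℝ)/2) ^ n = 1 / 2 ^ n := by rw [div_pow]; norm_num
      rw [this] at hn'
      exact absurd (hsmall n) (not_le.mpr hn')
    exact le_antisymm hle (hf_nonneg x)
  · -- {f < 1} ⊆ interior (closure (setBall A U))
    intro x hx
    simp only [Set.mem_setOf_eq] at hx
    obtain ⟨q, hqS, hq1⟩ := exists_lt_of_csInf_lt (hSne x) hx
    rcases hqS with rfl | ⟨n, k, hk, hxO, rfl⟩
    · exact absurd hq1 (lt_irrefl 1)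
    · have hxtop : x ∈ O' n (2 ^ n) :=
        QUAux.monoO hn A Vs hVmem hVc hk le_rfl hxO
      have : O' n (2 ^ n) = interior (closure (setBall A (Vs 0))) := by
        rw [hO', QUAux.O, QUAux.G_top]
      rw [this] at hxtop
      exact interior_mono (closure_mono (QUAux.setBall_mono_right A hV0U)) hxtop
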